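/- The rank-2 plactic monoid P₂ = ⟨a, b | aba = baa, bab = bba⟩ is an automaton monoid. Precisely, let Γ = {𝟙, a, b, c} (c standing for the column ba) and let N̄ : Γ×Γ → Γ×Γ be defined by N̄(b,a) = (𝟙,c), N̄(c,a) = (a,c), N̄(c,b) = (b,c), N̄(x,𝟙) = (𝟙,x) for x ∈ {a,b,c}, and N̄(x,y) = (x,y) for all other pairs. Let φ : Γ* → P₂ be the monoid homomorphism with φ(𝟙) = 1, φ(a) = a, φ(b) = b, φ(c) = b*a. Then for all words u, v over Γ, the production functions σ_u and σ_v are equal as functions List Γ → List Γ if and only if φ(u) = φ(v); hence the monoid generated by this Mealy automaton is isomorphic to P₂. -/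

import Mathlib

namespace Stmt15

variable {α : Type}

/-- Production function of the Mealy automaton associated with
`N̄(a,b) = (τ_a(b), σ_b(a))`: `σ_x([]) = []`,
`σ_x(i :: s) = σ_x(i) :: σ_{τ_i(x)}(s)`. -/
def prodFn (Nb : α → α → α × α) : α → List α → List α
  | _, [] => []
  | x, i :: s => (Nb i x).2 :: prodFn Nb ((Nb i x).1) s

/-- Production function of a word `u = x₁⋯xₙ`: `σ_u = σ_{xₙ} ∘ ⋯ ∘ σ_{x₁}`. -/
def prodWord (Nb : α → α → α × α) : List α → List α → List α
  | [], s => s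
  | x :: u, s => prodWord Nb u (prodFn Nb x s)

/-- The generators `a, b` of the rank-2 plactic monoid. -/
inductive X : Type
  | a : X
  | b : X
  deriving DecidableEq

instance instFintypeX : Fintype X := ⟨{X.a, X.b}, fun x => by cases x <;> simp⟩

/-- The defining relations of the rank-2 plactic monoid
`P₂ = ⟨a, b | aba = baa, bab = bba⟩`. -/
def placticRel : FreeMonoid X → FreeMonoid X → Prop :=
  fun u v =>
    (u = FreeMonoid.ofList [X.a, X.b, X.a] ∧ v = FreeMonoid.ofList [X.b, X.a, X.a]) ∨
      (u = FreeMonoid.ofList [X.b, X.a, X.b] ∧ v = FreeMonoid.ofList [X.b, X.b, X.a])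

/-- The rank-2 plactic monoid `P₂`. -/
def P2 : Type := (conGen placticRel).Quotient

instance : Monoid P2 := by unfold P2; infer_instance

/-- The image in `P₂` of a word over the generators. -/
def P2mk (l : List X) : P2 := (conGen placticRel).mk' (FreeMonoid.ofList l)

/-- The alphabet `Γ = {𝟙, a, b, c}`, `c` standing for the column `ba`. -/
inductive Γ : Type
  | one : Γ
  | a : Γ
  | b : Γ
  | c : Γ
  deriving DecidableEq

instance instFintypeΓ : Fintype Γ := ⟨{Γ.one, Γ.a, Γ.b, Γ.c}, fun x => by cases x <;> simp⟩

/-- The two-letter normalisation of `P₂` on the columns `Γ = {𝟙, a, b, c}`: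
`N̄(b,a) = (𝟙,c)`, `N̄(c,a) = (a,c)`, `N̄(c,b) = (b,c)`, `N̄(x,𝟙) = (𝟙,x)` for
`x ∈ {a,b,c}`, identity otherwise. -/
def placticNb : Γ → Γ → Γ × Γ
  | .b, .a => (.one, .c)
  | .c, .a => (.a, .c)
  | .c, .b => (.b, .c)
  | .a, .one => (.one, .a)
  | .b, .one => (.one, .b)
  | .c, .one => (.one, .c)
  | x, y => (x, y)

/-- The evaluation homomorphism `φ : Γ* → P₂` with `φ(𝟙) = 1`, `φ(a) = a`, `φ(b) = b`,
`φ(c) = b*a`. -/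
def phi : FreeMonoid Γ →* P2 :=
  FreeMonoid.lift fun x : Γ =>
    match x with
    | .one => 1
    | .a => P2mk [X.a]
    | .b => P2mk [X.b]
    | .c => P2mk [X.b] * P2mk [X.a]


open MulOpposite FreeMonoid

/-- One step of the automaton through a list of states: `step u i = (u', o)` where
feeding input `i` into the cascade of states `u` (head processed first) yields
output `o` and new states `u'`. -/
def step : List Γ → Γ → List Γ × Γ
  | [], i => ([], i)
  | x :: u, i =>
    let p := placticNb i x
    let q := step u p.2
    (p.1 :: q.1, q.2)

lemma prodWord_nil_input (u : List Γ) : prodWord placticNb u [] = [] := by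
  induction u with
  | nil => rfl
  | cons x u ih => simpa [prodWord, prodFn] using ih

lemma prodWord_cons (u : List Γ) (i : Γ) (s : List Γ) :
    prodWord placticNb u (i :: s)
      = (step u i).2 :: prodWord placticNb (step u i).1 s := by
  induction u generalizing i s with
  | nil => rfl
  | cons x u ih =>
    show prodWord placticNb u ((placticNb i x).2 :: prodFn placticNb (placticNb i x).1 s) = _
    rw [ih]
    rfl

/-- A finite bisimulation for the Mealy automaton. -/
def SP : List (List Γ × List Γ) :=
  [([.a, .a, .one], [.a, .one, .a]),
  ([.a, .b, .a], [.b, .a, .a]),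
  ([.a, .one], [.a]),
  ([.a, .one, .a], [.a, .a, .one]),
  ([.a, .one, .b], [.a, .b, .one]),
  ([.b, .a], [.c]),
  ([.b, .a, .b], [.b, .b, .a]),
  ([.b, .one], [.b]),
  ([.b, .one, .b], [.b, .b, .one]),
  ([.one], []),
  ([.one, .a, .one], [.a, .one, .one]),
  ([.one, .a, .one], [.one, .one, .a]),
  ([.one, .b, .a], [.b, .one, .a]),
  ([.one, .b, .one], [.b, .one, .one]),
  ([.one, .one], [.one]),
  ([.one, .one, .a], [.one, .a, .one]),
  ([.one, .one, .b], [.one, .b, .one]),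
  ([.one, .one, .one], [.one, .one, .one])]

lemma SP_closed : ∀ p ∈ SP, ∀ i : Γ,
    (step p.1 i).2 = (step p.2 i).2 ∧ ((step p.1 i).1, (step p.2 i).1) ∈ SP := by
  decide

lemma bisim : ∀ (s u v : List Γ), (u, v) ∈ SP →
    prodWord placticNb u s = prodWord placticNb v s := by
  intro s
  induction s with
  | nil => intro u v _; rw [prodWord_nil_input, prodWord_nil_input]
  | cons i s ih =>
    intro u v h
    obtain ⟨h1, h2⟩ := SP_closed (u, v) h i
    rw [prodWord_cons, prodWord_cons, h1, ih _ _ h2]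

lemma prodFn_one (s : List Γ) : prodFn placticNb Γ.one s = s :=
  bisim s [Γ.one] [] (by decide)

lemma prodFn_c (s : List Γ) :
    prodFn placticNb Γ.a (prodFn placticNb Γ.b s) = prodFn placticNb Γ.c s :=
  bisim s [Γ.b, Γ.a] [Γ.c] (by decide)

/-- The map sending a generator of `P₂` to its production function (opposite order). -/
def psiX : FreeMonoid X →* (Function.End (List Γ))ᵐᵒᵖ :=
  FreeMonoid.lift fun x =>
    match x with
    | X.a => op (prodFn placticNb Γ.a)
    | X.b => op (prodFn placticNb Γ.b)

def embX : X → Γ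
  | X.a => Γ.a
  | X.b => Γ.b

lemma psiX_ofList (l : List X) :
    psiX (FreeMonoid.ofList l) = op (fun s => prodWord placticNb (l.map embX) s) := by
  induction l with
  | nil =>
    apply unop_injective
    funext s
    rfl
  | cons x l ih =>
    rw [FreeMonoid.ofList_cons, map_mul, ih]
    apply unop_injective
    funext s
    cases x <;> rfl

lemma conGen_le_ker : conGen placticRel ≤ Con.ker psiX := by
  apply Con.conGen_le.mpr
  rintro x y (⟨rfl, rfl⟩ | ⟨rfl, rfl⟩) <;>
  · rw [Con.ker_rel, psiX_ofList, psiX_ofList]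
    apply congrArg
    funext s
    exact bisim s _ _ (by decide)

/-- The action of `P₂` on words realizing it as an automaton monoid. -/
def chi : P2 →* (Function.End (List Γ))ᵐᵒᵖ :=
  Con.lift _ psiX conGen_le_ker

lemma chi_P2mk (l : List X) : chi (P2mk l) = psiX (FreeMonoid.ofList l) :=
  Con.lift_mk' conGen_le_ker _

/-- The generator map of `φ`. -/
def phg : Γ → P2
  | Γ.one => 1
  | Γ.a => P2mk [X.a]
  | Γ.b => P2mk [X.b]
  | Γ.c => P2mk [X.b] * P2mk [X.a]

lemma phi_of (x : Γ) : phi (FreeMonoid.of x) = phg x := by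
  cases x <;> rfl

lemma chi_phg (x : Γ) : chi (phg x) = op (prodFn placticNb x) := by
  cases x
  · -- one
    show chi 1 = _
    rw [map_one]
    apply unop_injective
    funext s
    exact (prodFn_one s).symm
  · rw [show phg Γ.a = P2mk [X.a] from rfl, chi_P2mk, psiX_ofList]
    apply unop_injective
    funext s
    rfl
  · rw [show phg Γ.b = P2mk [X.b] from rfl, chi_P2mk, psiX_ofList]
    apply unop_injective
    funext s
    rfl
  · rw [show phg Γ.c = P2mk [X.b] * P2mk [X.a] from rfl, map_mul, chi_P2mk, chi_P2mk,
      psiX_ofList, psiX_ofList]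
    apply unop_injective
    funext s
    exact prodFn_c s

lemma chi_phi (u : List Γ) :
    chi (phi (FreeMonoid.ofList u)) = op (fun s => prodWord placticNb u s) := by
  induction u with
  | nil =>
    rw [FreeMonoid.ofList_nil, map_one, map_one]
    apply unop_injective
    funext s
    rfl
  | cons x u ih =>
    rw [FreeMonoid.ofList_cons, map_mul, map_mul, ih, phi_of, chi_phg]
    apply unop_injective
    funext s
    rfl

lemma P2mk_mul (l l' : List X) : P2mk l * P2mk l' = P2mk (l ++ l') := by
  unfold P2mk
  rw [FreeMonoid.ofList_append, map_mul]
  rfl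

lemma relA : P2mk [X.a, X.b, X.a] = P2mk [X.b, X.a, X.a] := by
  exact (Con.eq _).mpr (ConGen.Rel.of _ _ (Or.inl ⟨rfl, rfl⟩))

lemma relB : P2mk [X.b, X.a, X.b] = P2mk [X.b, X.b, X.a] := by
  exact (Con.eq _).mpr (ConGen.Rel.of _ _ (Or.inr ⟨rfl, rfl⟩))

lemma step1_inv (i x : Γ) :
    phg i * phg x = phg (placticNb i x).1 * phg (placticNb i x).2 := by
  cases i <;> cases x <;>
    simp only [phg, placticNb, one_mul, mul_one, mul_assoc, P2mk_mul,
      List.cons_append, List.nil_append] <;>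
    first
      | rfl
      | exact relA
      | exact relB
      | exact relA.symm

lemma step_inv (u : List Γ) (i : Γ) :
    phg i * phi (FreeMonoid.ofList u)
      = phi (FreeMonoid.ofList (step u i).1) * phg (step u i).2 := by
  induction u generalizing i with
  | nil =>
    show phg i * phi (FreeMonoid.ofList []) = phi (FreeMonoid.ofList []) * phg i
    rw [FreeMonoid.ofList_nil, map_one, one_mul, mul_one]
  | cons x u ih =>
    show phg i * phi (FreeMonoid.ofList (x :: u)) =
      phi (FreeMonoid.ofList ((placticNb i x).1 :: (step u (placticNb i x).2).1)) *
        phg (step u (placticNb i x).2).2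
    rw [FreeMonoid.ofList_cons, FreeMonoid.ofList_cons, map_mul, map_mul, phi_of, phi_of,
      ← mul_assoc, step1_inv, mul_assoc, ih, ← mul_assoc]

/-- The all-`one` state word. -/
def ones : ℕ → List Γ
  | 0 => []
  | n + 1 => Γ.one :: ones n

/-- Iterated flushing of the state word by feeding `one`s. -/
def flush : List Γ → ℕ → List Γ
  | u, 0 => u
  | u, n + 1 => flush (step u Γ.one).1 n

lemma length_step (u : List Γ) (i : Γ) : (step u i).1.length = u.length := by
  induction u generalizing i with
  | nil => rfl
  | cons x u ih => simpa [step] using ih _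

lemma Nb_one (x : Γ) : placticNb Γ.one x = (Γ.one, x) := by cases x <;> rfl

lemma step_ones_append (k : ℕ) (x : Γ) (u : List Γ) :
    step (ones k ++ x :: u) Γ.one = (ones (k + 1) ++ (step u x).1, (step u x).2) := by
  induction k with
  | zero => simp [ones, step, Nb_one]
  | succ k ih =>
    show step (Γ.one :: (ones k ++ x :: u)) Γ.one = _
    simp only [step, Nb_one, ih]
    rfl

lemma step_ones (k : ℕ) : step (ones k) Γ.one = (ones k, Γ.one) := by
  induction k with
  | zero => rfl
  | succ k ih =>
    show step (Γ.one :: ones k) Γ.one = _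
    simp only [step, Nb_one, ih]
    rfl

lemma flush_ones (k n : ℕ) : flush (ones k) n = ones k := by
  induction n with
  | zero => rfl
  | succ n ih =>
    show flush (step (ones k) Γ.one).1 n = _
    rw [step_ones, ih]

lemma flush_done : ∀ (n : ℕ) (u : List Γ) (k : ℕ), u.length = n →
    flush (ones k ++ u) n = ones (k + n) := by
  intro n
  induction n with
  | zero =>
    intro u k hu
    rw [List.length_eq_zero_iff] at hu
    subst hu
    simp [flush]
  | succ n ih =>
    intro u k hu
    cases u with
    | nil => simp at hu
    | cons x u =>
      show flush (step (ones k ++ x :: u) Γ.one).1 n = _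
      rw [step_ones_append]
      have : (k + 1) + n = k + (n + 1) := by omega
      rw [ih (step u x).1 (k + 1) (by rw [length_step]; simpa using hu), this]

lemma flush_add (u : List Γ) (n m : ℕ) :
    flush u (n + m) = flush (flush u n) m := by
  induction n generalizing u with
  | zero => rw [Nat.zero_add]; rfl
  | succ n ih =>
    rw [Nat.succ_add]
    show flush (step u Γ.one).1 (n + m) = _
    rw [ih]
    rfl

lemma flush_self (u : List Γ) : flush u u.length = ones u.length := by
  have := flush_done u.length u 0 rfl
  simpa [ones] using this

lemma phi_ones (n : ℕ) : phi (FreeMonoid.ofList (ones n)) = 1 := by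
  induction n with
  | zero => rfl
  | succ n ih =>
    show phi (FreeMonoid.ofList (Γ.one :: ones n)) = 1
    rw [FreeMonoid.ofList_cons, map_mul, ih, phi_of]
    rfl

/-- Reverse product of the outputs. -/
def gprod : List Γ → P2
  | [] => 1
  | o :: l => gprod l * phg o

lemma phi_flush (n : ℕ) (u : List Γ) :
    phi (FreeMonoid.ofList u)
      = phi (FreeMonoid.ofList (flush u n)) * gprod (prodWord placticNb u (ones n)) := by
  induction n generalizing u with
  | zero =>
    rw [show ones 0 = [] from rfl, prodWord_nil_input]
    exact (mul_one _).symm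
  | succ n ih =>
    have h1 : phg Γ.one = 1 := rfl
    have h2 := step_inv u Γ.one
    rw [h1, one_mul] at h2
    show _ = phi (FreeMonoid.ofList (flush (step u Γ.one).1 n)) *
      gprod (prodWord placticNb u (Γ.one :: ones n))
    rw [prodWord_cons, h2, ih (step u Γ.one).1]
    show _ = _ * (gprod (prodWord placticNb (step u Γ.one).1 (ones n)) * phg (step u Γ.one).2)
    rw [mul_assoc]

lemma phi_det (u : List Γ) (n : ℕ) (hn : u.length ≤ n) :
    phi (FreeMonoid.ofList u) = gprod (prodWord placticNb u (ones n)) := by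
  have h := phi_flush n u
  obtain ⟨m, rfl⟩ := Nat.exists_eq_add_of_le hn
  rw [flush_add, flush_self, flush_ones, phi_ones, one_mul] at h
  exact h

theorem plactic_automaton_monoid' :
    ∀ u v : List Γ, prodWord placticNb u = prodWord placticNb v ↔
      phi (FreeMonoid.ofList u) = phi (FreeMonoid.ofList v) := by
  intro u v
  constructor
  · intro h
    rw [phi_det u (u.length + v.length) (by omega),
      phi_det v (u.length + v.length) (by omega), h]
  · intro h
    have h2 := congrArg chi h
    rw [chi_phi, chi_phi] at h2
    exact MulOpposite.op_injective h2

/-- Example `ex-plactic`: the rank-2 plactic monoid `P₂` is an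
automaton monoid: two words over `Γ` induce the same production function of the Mealy
automaton iff they have the same image under `φ` in `P₂`; hence the monoid generated by
this Mealy automaton is isomorphic to `P₂`. -/
theorem plactic_automaton_monoid :
    ∀ u v : List Γ, prodWord placticNb u = prodWord placticNb v ↔
      phi (FreeMonoid.ofList u) = phi (FreeMonoid.ofList v) :=
  plactic_automaton_monoid'

end Stmt15
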